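/- arXiv:1309.1533 — 2 statements merged into one kernel-verified Lean document; each statement's English description precedes it below -/
import Mathlib

section
/- Let g be a ℤ-graded Lie superalgebra g = g_{−1} ⊕ g_0 ⊕ g_{+1} with [g_{+1}, g_{+1}] = 0 = [g_{−1}, g_{−1}], and let L(g) = g ⊗ ℂ[t,t⁻¹] be its loop superalgebra. If I is an ideal of ℂ[t,t⁻¹] and V is an L(g)-module generated by a subspace V⁰ with (g_0 ⊗ I)V⁰ = 0, (g_{+1} ⊗ ℂ[t,t⁻¹])V⁰ = 0, and (g_{−1} ⊗ I)V⁰ = 0, then (g ⊗ I)V = 0. -/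
/-- Let `g = g₋₁ ⊕ g₀ ⊕ g₊₁` be a ℤ-graded Lie superalgebra with
`[g₊₁,g₊₁] = 0 = [g₋₁,g₋₁]`, presented by its super bracket `B` (so even
elements act by commutators and odd elements pair by anticommutators in any
representation `ρ` of the loop superalgebra `L(g) = g ⊗ ℂ[t,t⁻¹]`).  If `I` is
an ideal of `ℂ[t,t⁻¹]` and `V` is an `L(g)`-module generated by a subspace
`V⁰` with `(g₀ ⊗ I)V⁰ = 0`, `(g₊₁ ⊗ ℂ[t,t⁻¹])V⁰ = 0` and `(g₋₁ ⊗ I)V⁰ = 0`,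
then `(g ⊗ I)V = 0`. -/
theorem stmt_11 (𝔤 V : Type) [AddCommGroup 𝔤] [Module ℂ 𝔤]
    [AddCommGroup V] [Module ℂ V]
    (gm g0 gp : Submodule ℂ 𝔤) (hdecomp : gm ⊔ g0 ⊔ gp = ⊤)
    (B : 𝔤 →ₗ[ℂ] 𝔤 →ₗ[ℂ] 𝔤)
    (hpp : ∀ x ∈ gp, ∀ y ∈ gp, B x y = 0)
    (hmm : ∀ x ∈ gm, ∀ y ∈ gm, B x y = 0)
    (h00 : ∀ x ∈ g0, ∀ y ∈ g0, B x y ∈ g0)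
    (h0p : ∀ x ∈ g0, ∀ y ∈ gp, B x y ∈ gp)
    (h0m : ∀ x ∈ g0, ∀ y ∈ gm, B x y ∈ gm)
    (hpm : ∀ x ∈ gp, ∀ y ∈ gm, B x y ∈ g0)
    (ρ : 𝔤 →ₗ[ℂ] LaurentPolynomial ℂ →ₗ[ℂ] Module.End ℂ V)
    (hrel0 : ∀ x ∈ g0, ∀ y : 𝔤, ∀ f g : LaurentPolynomial ℂ,
      ρ x f * ρ y g - ρ y g * ρ x f = ρ (B x y) (f * g))
    (hrel1 : ∀ x ∈ gm ⊔ gp, ∀ y ∈ gm ⊔ gp, ∀ f g : LaurentPolynomial ℂ,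
      ρ x f * ρ y g + ρ y g * ρ x f = ρ (B x y) (f * g))
    (I : Ideal (LaurentPolynomial ℂ)) (V0 : Submodule ℂ V)
    (h0I : ∀ x ∈ g0, ∀ f ∈ I, ∀ v ∈ V0, ρ x f v = 0)
    (hpL : ∀ x ∈ gp, ∀ f : LaurentPolynomial ℂ, ∀ v ∈ V0, ρ x f v = 0)
    (hmI : ∀ x ∈ gm, ∀ f ∈ I, ∀ v ∈ V0, ρ x f v = 0)
    (hgen : ∀ W : Submodule ℂ V, V0 ≤ W →
      (∀ (x : 𝔤) (f : LaurentPolynomial ℂ), ∀ w ∈ W, ρ x f w ∈ W) → W = ⊤) :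
    ∀ (x : 𝔤), ∀ f ∈ I, ∀ v : V, ρ x f v = 0 := by

  classical
  let W : Submodule ℂ V :=
    { carrier := {v | ∀ x : 𝔤, ∀ f ∈ I, ρ x f v = 0}
      add_mem' := by
        intro a b ha hb x f hf
        simp only [Set.mem_setOf_eq] at *
        rw [map_add, ha x f hf, hb x f hf, add_zero]
      zero_mem' := by intro x f hf; simp
      smul_mem' := by
        intro c v hv x f hf
        simp only [Set.mem_setOf_eq] at *
        rw [map_smul, hv x f hf, smul_zero] }
  have hmemW : ∀ v : V, v ∈ W ↔ ∀ x : 𝔤, ∀ f ∈ I, ρ x f v = 0 := fun v => Iff.rfl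
  have hdec : ∀ x : 𝔤, ∃ a ∈ gm, ∃ b ∈ g0, ∃ c ∈ gp, x = a + b + c := by
    intro x
    have hx : x ∈ gm ⊔ g0 ⊔ gp := by rw [hdecomp]; trivial
    rcases Submodule.mem_sup.1 hx with ⟨ab, hab, c, hc, rfl⟩
    rcases Submodule.mem_sup.1 hab with ⟨a, ha, b, hb, rfl⟩
    exact ⟨a, ha, b, hb, c, hc, rfl⟩
  have hV0 : V0 ≤ W := by
    intro v hv
    rw [hmemW]
    intro x f hf
    obtain ⟨a, ha, b, hb, c, hc, rfl⟩ := hdec x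
    simp only [map_add, LinearMap.add_apply]
    rw [hmI a ha f hf v hv, h0I b hb f hf v hv, hpL c hc f v hv, add_zero, add_zero]
  have step : ∀ w ∈ W, ∀ x : 𝔤, (x ∈ g0 ∨ x ∈ gm ⊔ gp) → ∀ y : 𝔤,
      (y ∈ g0 ∨ y ∈ gm ⊔ gp) → ∀ f ∈ I, ∀ g : LaurentPolynomial ℂ,
      ρ x f (ρ y g w) = 0 := by
    intro w hw x hx y hy f hf g
    rw [hmemW] at hw
    rcases hx with hx | hx
    · have h := DFunLike.congr_fun (hrel0 x hx y f g) w
      simp only [LinearMap.sub_apply, Module.End.mul_apply] at h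
      have h2 : ρ x f (ρ y g w) = ρ y g (ρ x f w) + ρ (B x y) (f * g) w := by
        rw [← h]; abel
      rw [h2, hw x f hf, map_zero, hw (B x y) (f * g) (Ideal.mul_mem_right g I hf), add_zero]
    · rcases hy with hy | hy
      · have h := DFunLike.congr_fun (hrel0 y hy x g f) w
        simp only [LinearMap.sub_apply, Module.End.mul_apply] at h
        have h2 : ρ x f (ρ y g w) = ρ y g (ρ x f w) - ρ (B y x) (g * f) w := by
          rw [← h]; abel
        rw [h2, hw x f hf, map_zero, hw (B y x) (g * f) (Ideal.mul_mem_left I g hf), sub_zero]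
      · have h := DFunLike.congr_fun (hrel1 x hx y hy f g) w
        simp only [LinearMap.add_apply, Module.End.mul_apply] at h
        have h2 : ρ x f (ρ y g w) = ρ (B x y) (f * g) w - ρ y g (ρ x f w) := by
          rw [← h]; abel
        rw [h2, hw x f hf, map_zero, hw (B x y) (f * g) (Ideal.mul_mem_right g I hf), sub_zero]
  have hstab : ∀ (y : 𝔤) (g : LaurentPolynomial ℂ), ∀ w ∈ W, ρ y g w ∈ W := by
    intro y g w hw
    rw [hmemW]
    intro x f hf
    obtain ⟨a, ha, b, hb, c, hc, rfl⟩ := hdec x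
    obtain ⟨a', ha', b', hb', c', hc', rfl⟩ := hdec y
    have Ha : a ∈ g0 ∨ a ∈ gm ⊔ gp := Or.inr (Submodule.mem_sup_left ha)
    have Hb : b ∈ g0 ∨ b ∈ gm ⊔ gp := Or.inl hb
    have Hc : c ∈ g0 ∨ c ∈ gm ⊔ gp := Or.inr (Submodule.mem_sup_right hc)
    have Ha' : a' ∈ g0 ∨ a' ∈ gm ⊔ gp := Or.inr (Submodule.mem_sup_left ha')
    have Hb' : b' ∈ g0 ∨ b' ∈ gm ⊔ gp := Or.inl hb'
    have Hc' : c' ∈ g0 ∨ c' ∈ gm ⊔ gp := Or.inr (Submodule.mem_sup_right hc')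
    simp only [map_add, LinearMap.add_apply]
    rw [step w hw a Ha a' Ha' f hf g, step w hw a Ha b' Hb' f hf g,
      step w hw a Ha c' Hc' f hf g, step w hw b Hb a' Ha' f hf g,
      step w hw b Hb b' Hb' f hf g, step w hw b Hb c' Hc' f hf g,
      step w hw c Hc a' Ha' f hf g, step w hw c Hc b' Hb' f hf g,
      step w hw c Hc c' Hc' f hf g]
    simp
  have hWtop := hgen W hV0 hstab
  intro x f hf v
  have hv : v ∈ W := by rw [hWtop]; trivial
  exact (hmemW v).1 hv x f hf
end

section
/- Let λ_1, …, λ_K be linear functionals on a complex vector space h and a_1, …, a_K distinct nonzero complex numbers. Define φ(h ⊗ t^m) = (∑_{j=1}^K a_j^m λ_j(h)) t^m for h ∈ h, m ∈ ℤ. If not all λ_j are zero, then the image of φ, i.e., the ℂ-span of {t^m : ∑_j a_j^m λ_j ≠ 0 in h*}, contains t^m for all m in some coset union whose generated subring of ℂ[t,t⁻¹] equals ℂ[t^r,t^{−r}] for some positive integer r. -/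
open LaurentPolynomial

set_option maxHeartbeats 1000000

/-- (Chari–Pressley.)  Let `λ₁,…,λ_K` be linear functionals on a complex
vector space `h`, not all zero, and `a₁,…,a_K` distinct nonzero complex
numbers.  The subring of `ℂ[t,t⁻¹]` generated by the monomials `t^m` with
`∑_j a_j^m λ_j ≠ 0` equals `ℂ[t^r, t^{-r}]` for some positive integer `r`. -/
theorem stmt_14 (h : Type) [AddCommGroup h] [Module ℂ h]
    [FiniteDimensional ℂ h]
    (K : ℕ) (lam : Fin K → Module.Dual ℂ h) (a : Fin K → ℂ)
    (ha0 : ∀ j, a j ≠ 0) (hinj : Function.Injective a)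
    (hlam : ¬ ∀ j, lam j = 0) :
    ∃ r : ℕ, 0 < r ∧
      Algebra.adjoin ℂ
          ((fun m : ℤ => LaurentPolynomial.T (R := ℂ) m) ''
            {m : ℤ | (∑ j : Fin K, (a j ^ m) • lam j) ≠ 0}) =
        Algebra.adjoin ℂ
          {LaurentPolynomial.T (R := ℂ) (r : ℤ),
            LaurentPolynomial.T (-(r : ℤ))} := by
  push_neg at hlam
  obtain ⟨j0, hj0⟩ := hlam
  obtain ⟨v, hv⟩ : ∃ v, lam j0 v ≠ 0 := by
    by_contra hcon
    push_neg at hcon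
    exact hj0 (LinearMap.ext hcon)
  set S : Set ℤ := {m : ℤ | (∑ j : Fin K, (a j ^ m) • lam j) ≠ 0} with hSdef
  -- Key: every window of `K` consecutive integers meets `S`.
  have key : ∀ m0 : ℤ, ∃ i : Fin K, (m0 + (i : ℤ)) ∈ S := by
    intro m0
    by_contra hcon
    push_neg at hcon
    simp only [hSdef, Set.mem_setOf_eq, not_not] at hcon
    have hM : Matrix.mulVec ((Matrix.vandermonde a).transpose)
        (fun j => a j ^ m0 * lam j v) = 0 := by
      funext i
      have h1 := congrArg (fun φ : Module.Dual ℂ h => φ v) (hcon i)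
      simp only [LinearMap.sum_apply, LinearMap.smul_apply, smul_eq_mul,
        LinearMap.zero_apply] at h1
      simp only [Matrix.mulVec, dotProduct, Matrix.transpose_apply,
        Matrix.vandermonde_apply, Pi.zero_apply]
      rw [← h1]
      refine Finset.sum_congr rfl fun j _ => ?_
      rw [zpow_add₀ (ha0 j), zpow_natCast]
      ring
    have hdet : IsUnit ((Matrix.vandermonde a).transpose) := by
      rw [Matrix.isUnit_iff_isUnit_det, Matrix.det_transpose, isUnit_iff_ne_zero]
      exact Matrix.det_vandermonde_ne_zero_iff.mpr hinj
    have hzero : (fun j => a j ^ m0 * lam j v) = 0 := by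
      apply Matrix.mulVec_injective_iff_isUnit.mpr hdet
      rw [hM, Matrix.mulVec_zero]
    have h2 := congrFun hzero j0
    simp only [Pi.zero_apply, mul_eq_zero] at h2
    rcases h2 with h2 | h2
    · exact zpow_ne_zero m0 (ha0 j0) h2
    · exact hv h2
  -- S has a positive and a negative element.
  obtain ⟨ip, hp⟩ := key 1
  obtain ⟨iq, hq⟩ := key (-(K : ℤ))
  set p : ℤ := 1 + (ip : ℤ) with hpdef
  set q : ℤ := -(K : ℤ) + (iq : ℤ) with hqdef
  have hp0 : 0 < p := by
    have := ip.2; omega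
  have hq0 : q < 0 := by
    have hiq : (iq : ℤ) < (K : ℤ) := by exact_mod_cast iq.2
    omega
  set Msub : AddSubmonoid ℤ := AddSubmonoid.closure S with hMdef
  have hpM : p ∈ Msub := AddSubmonoid.subset_closure hp
  have hqM : q ∈ Msub := AddSubmonoid.subset_closure hq
  -- N = p * (-q) > 0, and both N and -N lie in Msub.
  set N : ℤ := p * (-q) with hNdef
  have hN1 : 1 ≤ N := by
    have hpos := mul_pos hp0 (neg_pos.mpr hq0)
    rw [← hNdef] at hpos
    omega
  have hNM : N ∈ Msub := by
    have := AddSubmonoid.nsmul_mem Msub hpM (-q).toNat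
    rw [nsmul_eq_mul, Int.toNat_of_nonneg (by omega)] at this
    rwa [show -q * p = N by rw [hNdef]; ring] at this
  have hNM' : -N ∈ Msub := by
    have := AddSubmonoid.nsmul_mem Msub hqM p.toNat
    rw [nsmul_eq_mul, Int.toNat_of_nonneg (by omega)] at this
    rwa [show p * q = -N by rw [hNdef]; ring] at this
  -- Msub is closed under negation on generators, hence on everything.
  have hSneg : ∀ s ∈ S, -s ∈ Msub := by
    intro s hs
    have hsM : s ∈ Msub := AddSubmonoid.subset_closure hs
    rcases le_or_gt 0 s with hs0 | hs0
    · have h1 := AddSubmonoid.nsmul_mem Msub hsM (N - 1).toNat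
      have h2 := AddSubmonoid.nsmul_mem Msub hNM' s.toNat
      have h3 := AddSubmonoid.add_mem Msub h1 h2
      rwa [nsmul_eq_mul, nsmul_eq_mul, Int.toNat_of_nonneg (by omega),
        Int.toNat_of_nonneg hs0, show (N - 1) * s + s * -N = -s by ring] at h3
    · have h1 := AddSubmonoid.nsmul_mem Msub hsM (N - 1).toNat
      have h2 := AddSubmonoid.nsmul_mem Msub hNM (-s).toNat
      have h3 := AddSubmonoid.add_mem Msub h1 h2
      rwa [nsmul_eq_mul, nsmul_eq_mul, Int.toNat_of_nonneg (by omega),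
        Int.toNat_of_nonneg (by omega), show (N - 1) * s + -s * N = -s by ring] at h3
  have hneg : ∀ n ∈ Msub, -n ∈ Msub := by
    intro n hn
    induction hn using AddSubmonoid.closure_induction with
    | mem x hx => exact hSneg x hx
    | zero => simpa using Msub.zero_mem
    | add x y _ _ hx hy => rw [neg_add]; exact Msub.add_mem hx hy
  -- Package as a subgroup of ℤ; it is cyclic.
  set G : AddSubgroup ℤ :=
    { Msub with neg_mem' := fun {x} hx => hneg x hx } with hGdef
  have hGmem : ∀ x : ℤ, x ∈ G ↔ x ∈ Msub := fun x => Iff.rfl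
  obtain ⟨g, hg⟩ := Int.subgroup_cyclic G
  have hgG : g ∈ G := by rw [hg]; exact AddSubgroup.mem_closure_singleton.mpr ⟨1, one_zsmul g⟩
  have hgne : g ≠ 0 := by
    rintro rfl
    have hpG : p ∈ G := hpM
    rw [hg] at hpG
    obtain ⟨k, hk⟩ := AddSubgroup.mem_closure_singleton.mp hpG
    simp at hk
    omega
  refine ⟨g.natAbs, Int.natAbs_pos.mpr hgne, ?_⟩
  set r : ℕ := g.natAbs with hrdef
  -- membership of T n in the left adjoin for n ∈ Msub
  have hTmem : ∀ n ∈ Msub, (T (R := ℂ) n) ∈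
      Algebra.adjoin ℂ ((fun m : ℤ => LaurentPolynomial.T (R := ℂ) m) '' S) := by
    intro n hn
    induction hn using AddSubmonoid.closure_induction with
    | mem x hx => exact Algebra.subset_adjoin ⟨x, hx, rfl⟩
    | zero =>
        show (T (R := ℂ) 0) ∈ _
        rw [T_zero]; exact one_mem _
    | add x y _ _ hx hy =>
        show (T (R := ℂ) (x + y)) ∈ _
        rw [T_add]; exact mul_mem hx hy
  -- any multiple of r gives a T in the right adjoin
  have hTright : ∀ m k : ℤ, m = k * (r : ℤ) →
      (T (R := ℂ) m) ∈ Algebra.adjoin ℂ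
        {LaurentPolynomial.T (R := ℂ) (r : ℤ), LaurentPolynomial.T (-(r : ℤ))} := by
    intro m k hk
    rcases le_or_gt 0 k with hk0 | hk0
    · have : (T (R := ℂ) m) = (T (R := ℂ) (r : ℤ)) ^ k.toNat := by
        rw [T_pow, Int.toNat_of_nonneg hk0, hk]
      rw [this]
      exact pow_mem (Algebra.subset_adjoin (Set.mem_insert _ _)) _
    · have : (T (R := ℂ) m) = (T (R := ℂ) (-(r : ℤ))) ^ (-k).toNat := by
        rw [T_pow, Int.toNat_of_nonneg (by omega)]
        congr 1
        rw [hk]; ring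
      rw [this]
      have hmem : (T (R := ℂ) (-(r : ℤ))) ∈
          ({LaurentPolynomial.T (R := ℂ) (r : ℤ), LaurentPolynomial.T (-(r : ℤ))} :
            Set (LaurentPolynomial ℂ)) :=
        Set.mem_insert_of_mem _ (Set.mem_singleton _)
      exact pow_mem (Algebra.subset_adjoin hmem) _
  apply le_antisymm
  · apply Algebra.adjoin_le
    rintro _ ⟨m, hm, rfl⟩
    have hmG : m ∈ G := (hGmem m).mpr (AddSubmonoid.subset_closure hm)
    rw [hg] at hmG
    obtain ⟨k, hk⟩ := AddSubgroup.mem_closure_singleton.mp hmG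
    rcases Int.natAbs_eq g with hga | hga
    · exact hTright m k (by rw [← hrdef] at hga; rw [← hk, zsmul_eq_mul, hga]; push_cast; ring)
    · refine hTright m (-k) ?_
      rw [← hrdef] at hga
      rw [← hk, zsmul_eq_mul]
      rw [hga]; push_cast; ring
  · apply Algebra.adjoin_le
    intro x hx
    have hrG : (r : ℤ) ∈ Msub := by
      rcases Int.natAbs_eq g with hga | hga
      · rw [← hrdef] at hga; rw [← hga]; exact hgG
      · rw [← hrdef] at hga
        have : (r : ℤ) = -g := by omega
        rw [this]; exact hneg g hgG
    have hrG' : -(r : ℤ) ∈ Msub := hneg _ hrG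
    rcases hx with hx | hx
    · rw [hx]; exact hTmem _ hrG
    · rw [Set.mem_singleton_iff] at hx
      rw [hx]; exact hTmem _ hrG'
end
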